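/- Let X, Y be independent random vectors in ℝ₊^d. Suppose there is a function b(t) → ∞ and a measure μ on E_d^(i)={z: z_(i)>0} such that for every rectangular set A = {z : z_j > x_j ∀ j ∈ S} (S ⊆ {1,…,d}, |S| ≥ i, x_j > 0) with μ(∂A) = 0 one has t·P(X ∈ b(t)A) → μ(A), and suppose E‖Y‖^{α_i+γ} < ∞ for some γ > 0, where b ∈ RV_{1/α_i}. Then for every such μ-continuity rectangular set A, t·P(X + Y ∈ b(t)A) → μ(A) as t → ∞. -/

import Mathlib

open MeasureTheory Filter ProbabilityTheory Set

lemma rv_growth (αi p : ℝ) (hαi : 0 < αi) (hp : αi < p)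
    (b : ℝ → ℝ) (hbpos : ∀ t, 0 < b t) (hbtop : Tendsto b atTop atTop)
    (hbrv : ∀ s : ℝ, 0 < s →
      Tendsto (fun t : ℝ => b (t * s) / b t) atTop (nhds (s ^ (αi⁻¹)))) :
    Tendsto (fun t : ℝ => t * ((b t) ^ p)⁻¹) atTop (nhds 0) := by
  have hp0 : 0 < p := hαi.trans hp
  have hip : p⁻¹ < αi⁻¹ := inv_strictAnti₀ hαi hp
  have hdiff : 0 < αi⁻¹ - p⁻¹ := sub_pos.2 hip
  have hlog2 : (0:ℝ) < Real.log 2 := Real.log_pos one_lt_two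
  set s₀ : ℝ := Real.exp (2 * Real.log 2 / (αi⁻¹ - p⁻¹)) with hs₀def
  have hs₀1 : 1 < s₀ := by
    rw [hs₀def, ← Real.exp_zero]
    exact Real.exp_lt_exp.2 (by positivity)
  have hs₀0 : 0 < s₀ := lt_trans one_pos hs₀1
  set δ : ℝ := (αi⁻¹ + p⁻¹) / 2 with hδdef
  have hδ0 : 0 < δ := by positivity
  have hδαi : δ < αi⁻¹ := by rw [hδdef]; linarith
  have hδp : 1 < δ * p := by
    have h1 : 1 < p * αi⁻¹ := by
      rw [← mul_inv_cancel₀ hαi.ne']; exact mul_lt_mul_of_pos_right hp (by positivity)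
    rw [hδdef]; rw [div_mul_eq_mul_div, add_mul, inv_mul_cancel₀ hp0.ne']
    nlinarith
  set r : ℝ := s₀ ^ δ with hrdef
  have hr1 : 1 < r := Real.one_lt_rpow_iff_of_pos hs₀0 |>.2 (Or.inl ⟨hs₀1, hδ0⟩)
  have hr0 : 0 < r := lt_trans one_pos hr1
  have hrlt : r < s₀ ^ αi⁻¹ := Real.rpow_lt_rpow_left_iff hs₀1 |>.2 hδαi
  -- eventual multiplicative growth
  obtain ⟨T₁, hT₁⟩ := eventually_atTop.1 ((hbrv s₀ hs₀0).eventually_const_lt hrlt)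
  obtain ⟨T₂, hT₂⟩ := eventually_atTop.1 (hbtop.eventually_ge_atTop 1)
  set T : ℝ := max 1 (max T₁ T₂) with hTdef
  have hT1 : (1:ℝ) ≤ T := le_max_left _ _
  have hT0 : (0:ℝ) < T := lt_of_lt_of_le one_pos hT1
  have hTT₁ : T₁ ≤ T := le_trans (le_max_left _ _) (le_max_right _ _)
  have hTT₂ : T₂ ≤ T := le_trans (le_max_right _ _) (le_max_right _ _)
  set C : ℝ := ((T * s₀) ^ δ)⁻¹ with hCdef
  have hC0 : 0 < C := by positivity
  have key : ∀ n : ℕ, ∀ t : ℝ, T ≤ t → t ≤ T * s₀ ^ (n+1) → C * t ^ δ ≤ b t := by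
    intro n
    induction n with
    | zero =>
      intro t ht1 ht2
      have ht0 : 0 < t := lt_of_lt_of_le hT0 ht1
      have h1 : t ^ δ ≤ (T * s₀) ^ δ := by
        apply Real.rpow_le_rpow ht0.le _ hδ0.le
        simpa [pow_one] using ht2
      have h2 : C * t ^ δ ≤ 1 := by
        rw [hCdef]
        calc ((T * s₀) ^ δ)⁻¹ * t ^ δ ≤ ((T * s₀) ^ δ)⁻¹ * (T * s₀) ^ δ := by
              apply mul_le_mul_of_nonneg_left h1 (by positivity)
          _ = 1 := inv_mul_cancel₀ (by positivity)
      exact h2.trans (hT₂ t (hTT₂.trans ht1))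
    | succ n ih =>
      intro t ht1 ht2
      have ht0 : 0 < t := lt_of_lt_of_le hT0 ht1
      rcases le_or_gt t (T * s₀ ^ (n+1)) with h | h
      · exact ih t ht1 h
      · set u : ℝ := t / s₀ with hudef
        have hu1 : T ≤ u := by
          rw [hudef, le_div_iff₀ hs₀0]
          calc T * s₀ ≤ T * s₀ ^ (n+1) := by
                apply mul_le_mul_of_nonneg_left _ hT0.le
                simpa using pow_le_pow_right₀ hs₀1.le (Nat.one_le_iff_ne_zero.2 (Nat.succ_ne_zero n))
            _ ≤ t := h.le
        have hu2 : u ≤ T * s₀ ^ (n+1) := by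
          rw [hudef, div_le_iff₀ hs₀0]
          calc t ≤ T * s₀ ^ (n+1+1) := ht2
            _ = T * s₀ ^ (n+1) * s₀ := by ring
        have hus : u * s₀ = t := div_mul_cancel₀ t hs₀0.ne'
        have hb : r < b (u * s₀) / b u := hT₁ u (hTT₁.trans hu1)
        have hbu : C * u ^ δ ≤ b u := ih u hu1 hu2
        have hu0 : 0 < u := lt_of_lt_of_le hT0 hu1
        have h3 : r * b u ≤ b t := by
          rw [← hus]
          have := (lt_div_iff₀ (hbpos u)).1 hb
          linarith
        calc C * t ^ δ = r * (C * u ^ δ) := by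
              rw [hudef, Real.div_rpow ht0.le hs₀0.le, hrdef]
              field_simp
          _ ≤ r * b u := by apply mul_le_mul_of_nonneg_left hbu hr0.le
          _ ≤ b t := h3
  have hlow : ∀ᶠ t in atTop, C * t ^ δ ≤ b t := by
    filter_upwards [eventually_ge_atTop T] with t ht
    obtain ⟨n, hn⟩ := pow_unbounded_of_one_lt t hs₀1
    apply key n t ht
    calc t ≤ s₀ ^ n := hn.le
      _ ≤ s₀ ^ (n+1) := pow_le_pow_right₀ hs₀1.le (Nat.le_succ n)
      _ ≤ T * s₀ ^ (n+1) := le_mul_of_one_le_left (pow_nonneg hs₀0.le _) hT1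
  -- conclude
  have hneg : 0 < δ * p - 1 := by linarith
  have hg : Tendsto (fun t : ℝ => (C ^ p)⁻¹ * t ^ (1 - δ * p)) atTop (nhds 0) := by
    have := (tendsto_rpow_neg_atTop hneg).const_mul ((C ^ p)⁻¹)
    rw [mul_zero] at this
    refine this.congr (fun t => by rw [neg_sub])
  apply squeeze_zero' _ _ hg
  · filter_upwards [eventually_ge_atTop (0:ℝ)] with t ht
    have := hbpos t
    positivity
  · filter_upwards [hlow, eventually_ge_atTop (max T 1)] with t h1 h2
    have ht1 : (1:ℝ) ≤ t := le_trans (le_max_right _ _) h2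
    have ht0 : (0:ℝ) < t := lt_of_lt_of_le one_pos ht1
    have hbt : 0 < C * t ^ δ := by positivity
    have h4 : (C * t ^ δ) ^ p ≤ (b t) ^ p := Real.rpow_le_rpow hbt.le h1 hp0.le
    have h5 : ((b t) ^ p)⁻¹ ≤ ((C * t ^ δ) ^ p)⁻¹ := by
      apply inv_anti₀ (by positivity) h4
    calc t * ((b t) ^ p)⁻¹ ≤ t * ((C * t ^ δ) ^ p)⁻¹ := by
          apply mul_le_mul_of_nonneg_left h5 ht0.le
      _ = (C ^ p)⁻¹ * t ^ (1 - δ * p) := by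
          rw [Real.mul_rpow hC0.le (by positivity), ← Real.rpow_mul ht0.le,
            Real.rpow_sub ht0, Real.rpow_one, mul_inv]
          field_simp

lemma prob_toReal_le_add {Ω : Type*} [MeasurableSpace Ω] (μ : Measure Ω)
    [IsProbabilityMeasure μ] {A B C : Set Ω} (h : A ⊆ B ∪ C) :
    (μ A).toReal ≤ (μ B).toReal + (μ C).toReal := by
  have h1 : μ A ≤ μ B + μ C := (measure_mono h).trans (measure_union_le _ _)
  have h2 := ENNReal.toReal_mono
    (ENNReal.add_ne_top.2 ⟨measure_ne_top μ _, measure_ne_top μ _⟩) h1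
  rwa [ENNReal.toReal_add (measure_ne_top μ _) (measure_ne_top μ _)] at h2

lemma tail_tendsto {Ω : Type*} [MeasurableSpace Ω] (μ : Measure Ω) [IsProbabilityMeasure μ]
    (p : ℝ) (hp : 0 < p) (f : Ω → ℝ) (hf : ∀ ω, 0 ≤ f ω)
    (hmom : Integrable (fun ω => f ω ^ p) μ)
    (b : ℝ → ℝ) (hbpos : ∀ t, 0 < b t)
    (hb : Tendsto (fun t : ℝ => t * ((b t) ^ p)⁻¹) atTop (nhds 0))
    (c : ℝ) (hc : 0 < c) :
    Tendsto (fun t : ℝ => t * (μ {ω | c * b t < f ω}).toReal) atTop (nhds 0) := by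
  set M : ℝ := ∫ ω, f ω ^ p ∂μ with hMdef
  have hM0 : 0 ≤ M := integral_nonneg fun ω => Real.rpow_nonneg (hf ω) p
  have hg : Tendsto (fun t : ℝ => M * (c ^ p)⁻¹ * (t * ((b t) ^ p)⁻¹)) atTop (nhds 0) := by
    simpa using hb.const_mul (M * (c ^ p)⁻¹)
  apply squeeze_zero' _ _ hg
  · filter_upwards [eventually_ge_atTop (0:ℝ)] with t ht
    exact mul_nonneg ht ENNReal.toReal_nonneg
  · filter_upwards [eventually_ge_atTop (0:ℝ)] with t ht
    have ha : 0 < c * b t := mul_pos hc (hbpos t)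
    have hsub : {ω | c * b t < f ω} ⊆ {ω | (c * b t) ^ p ≤ f ω ^ p} := fun ω hω =>
      Real.rpow_le_rpow ha.le (le_of_lt hω) hp.le
    have hmarkov := mul_meas_ge_le_integral_of_nonneg
      (ae_of_all μ fun ω => Real.rpow_nonneg (hf ω) p) hmom ((c * b t) ^ p)
    have hmono : (μ {ω | c * b t < f ω}).toReal ≤ (μ {ω | (c * b t) ^ p ≤ f ω ^ p}).toReal :=
      ENNReal.toReal_mono (measure_ne_top μ _) (measure_mono hsub)
    have hap : 0 < (c * b t) ^ p := Real.rpow_pos_of_pos ha p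
    have h1 : (μ {ω | c * b t < f ω}).toReal ≤ M * ((c * b t) ^ p)⁻¹ := by
      rw [← le_div_iff₀' hap] at hmarkov
      calc (μ {ω | c * b t < f ω}).toReal ≤ (μ {ω | (c * b t) ^ p ≤ f ω ^ p}).toReal := hmono
        _ ≤ M / (c * b t) ^ p := hmarkov
        _ = M * ((c * b t) ^ p)⁻¹ := div_eq_mul_inv _ _
    calc t * (μ {ω | c * b t < f ω}).toReal ≤ t * (M * ((c * b t) ^ p)⁻¹) :=
          mul_le_mul_of_nonneg_left h1 ht
      _ = M * (c ^ p)⁻¹ * (t * ((b t) ^ p)⁻¹) := by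
          rw [Real.mul_rpow hc.le (hbpos t).le, mul_inv]
          ring

/-- Heavier tail wins on the subcone `E_d^(i)`: if `X` is MRV on `E_d^(i)` (tested on
rectangular continuity sets, with scaling `b ∈ RV_{1/α_i}`) and `Y` is independent with
`E‖Y‖^{α_i+γ} < ∞`, then `X + Y` is MRV on `E_d^(i)` with the same limit measure. -/
theorem heavier_tail_wins_subcone
    {Ω : Type*} [MeasurableSpace Ω] (μ : Measure Ω) [IsProbabilityMeasure μ]
    (d i : ℕ) (hi1 : 1 ≤ i) (hid : i ≤ d)
    (αi γ : ℝ) (hαi : 0 < αi) (hγ : 0 < γ)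
    (X Y : Ω → Fin d → ℝ)
    (hXnn : ∀ ω j, 0 ≤ X ω j)
    (b : ℝ → ℝ) (hbpos : ∀ t, 0 < b t) (hbtop : Tendsto b atTop atTop)
    (hbrv : ∀ s : ℝ, 0 < s →
      Tendsto (fun t : ℝ => b (t * s) / b t) atTop (nhds (s ^ (αi⁻¹))))
    (μlim : Measure (Fin d → ℝ))
    (hX : ∀ (S : Finset (Fin d)) (x : Fin d → ℝ), i ≤ S.card → (∀ j ∈ S, 0 < x j) →
      μlim (frontier {z : Fin d → ℝ | ∀ j ∈ S, x j < z j}) = 0 →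
      Tendsto (fun t : ℝ => t * (μ {ω | ∀ j ∈ S, b t * x j < X ω j}).toReal)
        atTop (nhds ((μlim {z : Fin d → ℝ | ∀ j ∈ S, x j < z j}).toReal)))
    (hmom : Integrable (fun ω => ‖Y ω‖ ^ (αi + γ)) μ)
    (hindep : IndepFun X Y μ) :
    ∀ (S : Finset (Fin d)) (x : Fin d → ℝ), i ≤ S.card → (∀ j ∈ S, 0 < x j) →
      μlim (frontier {z : Fin d → ℝ | ∀ j ∈ S, x j < z j}) = 0 →
      Tendsto (fun t : ℝ => t * (μ {ω | ∀ j ∈ S, b t * x j < X ω j + Y ω j}).toReal)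
        atTop (nhds ((μlim {z : Fin d → ℝ | ∀ j ∈ S, x j < z j}).toReal)) := by
  intro S x hScard hxpos hfr
  set L : ℝ := (μlim {z : Fin d → ℝ | ∀ j ∈ S, x j < z j}).toReal with hLdef
  have hL0 : 0 ≤ L := ENNReal.toReal_nonneg
  have hSne : S.Nonempty := Finset.card_pos.1 (lt_of_lt_of_le hi1 hScard)
  set m : ℝ := S.inf' hSne x with hmdef
  have hm0 : 0 < m := (Finset.lt_inf'_iff hSne).2 hxpos
  have hmle : ∀ j ∈ S, m ≤ x j := fun j hj => Finset.inf'_le x hj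
  have hA := hX S x hScard hxpos hfr
  -- scaled limits
  have hscale : ∀ s : ℝ, 0 < s →
      Tendsto (fun t : ℝ => t * (μ {ω | ∀ j ∈ S, b (t * s) * x j < X ω j}).toReal)
        atTop (nhds (s⁻¹ * L)) := by
    intro s hs
    have h1 : Tendsto (fun t : ℝ => t * s) atTop atTop :=
      Tendsto.atTop_mul_const hs tendsto_id
    have h2 := (hA.comp h1).const_mul s⁻¹
    refine h2.congr fun t => ?_
    simp only [Function.comp]
    field_simp
  -- tail estimate
  have htail0 := rv_growth αi (αi + γ) hαi (by linarith) b hbpos hbtop hbrv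
  have htail : ∀ c : ℝ, 0 < c →
      Tendsto (fun t : ℝ => t * (μ {ω | c * b t < ‖Y ω‖}).toReal) atTop (nhds 0) :=
    fun c hc => tail_tendsto μ (αi + γ) (by linarith) (fun ω => ‖Y ω‖)
      (fun ω => norm_nonneg _) hmom b hbpos htail0 c hc
  rw [tendsto_order]
  constructor
  · -- lower bound
    intro c hc
    have hcont : Tendsto (fun ε : ℝ => ((1 + 2 * ε) ^ αi)⁻¹ * L) (nhds 0) (nhds L) := by
      have h1 : ContinuousAt (fun ε : ℝ => ((1 + 2 * ε) ^ αi)⁻¹ * L) 0 := by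
        apply ContinuousAt.mul _ continuousAt_const
        apply ContinuousAt.inv₀
        · exact (Real.continuousAt_rpow_const _ _ (Or.inl (by norm_num))).comp (by fun_prop)
        · simp [Real.one_rpow]
      have h2 := h1.tendsto
      simpa [Real.one_rpow] using h2
    have hev := ((hcont.mono_left nhdsWithin_le_nhds).eventually_const_lt hc).and
      (self_mem_nhdsWithin (s := Ioi (0:ℝ)) (a := (0:ℝ)))
    obtain ⟨ε, hcε, hε0⟩ := hev.exists

    set s₂ : ℝ := (1 + 2 * ε) ^ αi with hs₂def
    have h1ε : (0:ℝ) < 1 + 2 * ε := by linarith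
    have hs₂0 : 0 < s₂ := Real.rpow_pos_of_pos h1ε αi
    have hs₂rv : s₂ ^ αi⁻¹ = 1 + 2 * ε := by
      rw [hs₂def, ← Real.rpow_mul h1ε.le, mul_inv_cancel₀ hαi.ne', Real.rpow_one]
    have hev2 : ∀ᶠ t in atTop, (1 + ε) * b t < b (t * s₂) := by
      have h := (hbrv s₂ hs₂0).eventually_const_lt
        (show (1 + ε : ℝ) < s₂ ^ αi⁻¹ by rw [hs₂rv]; linarith)
      filter_upwards [h] with t ht
      have hbt := hbpos t
      calc (1 + ε) * b t < (b (t * s₂) / b t) * b t := by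
            exact mul_lt_mul_of_pos_right ht hbt
        _ = b (t * s₂) := div_mul_cancel₀ _ hbt.ne'
    have hlow := (hscale s₂ hs₂0).sub (htail (ε * m) (by positivity))
    rw [sub_zero] at hlow
    have hev3 := hlow.eventually_const_lt (show c < s₂⁻¹ * L by rw [inv_mul_eq_div, ← inv_mul_eq_div]; exact hcε)
    filter_upwards [hev2, hev3, eventually_ge_atTop (0:ℝ)] with t hb2 h3 ht0
    have hincl : {ω | ∀ j ∈ S, b (t * s₂) * x j < X ω j} ⊆
        {ω | ∀ j ∈ S, b t * x j < X ω j + Y ω j} ∪ {ω | ε * m * b t < ‖Y ω‖} := by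
      intro ω hω
      by_cases hY : ε * m * b t < ‖Y ω‖
      · exact Or.inr hY
      · left
        intro j hj
        push_neg at hY
        have hYj : |Y ω j| ≤ ‖Y ω‖ := by
          simpa [Real.norm_eq_abs] using norm_le_pi_norm (Y ω) j
        have hxj := hxpos j hj
        have hmxj := hmle j hj
        have hbt := hbpos t
        have hY1 : -(ε * x j * b t) ≤ Y ω j := by
          have h5 : ε * m * b t ≤ ε * x j * b t :=
            mul_le_mul_of_nonneg_right (mul_le_mul_of_nonneg_left hmxj hε0.le) hbt.le
          have h6 := (abs_le.1 (hYj.trans hY)).1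
          linarith
        have h7 : (1 + ε) * b t * x j < X ω j := by
          calc (1 + ε) * b t * x j < b (t * s₂) * x j :=
                mul_lt_mul_of_pos_right hb2 hxj
            _ < X ω j := hω j hj
        nlinarith [mul_pos hbt hxj]
    have hsum := prob_toReal_le_add μ hincl
    have h8 := mul_le_mul_of_nonneg_left hsum ht0
    rw [mul_add] at h8
    linarith
  · -- upper bound
    intro c hc
    have hcont : Tendsto (fun ε : ℝ => ((1 - 2 * ε) ^ αi)⁻¹ * L) (nhds 0) (nhds L) := by
      have h1 : ContinuousAt (fun ε : ℝ => ((1 - 2 * ε) ^ αi)⁻¹ * L) 0 := by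
        apply ContinuousAt.mul _ continuousAt_const
        apply ContinuousAt.inv₀
        · exact (Real.continuousAt_rpow_const _ _ (Or.inl (by norm_num))).comp (by fun_prop)
        · simp [Real.one_rpow]
      have h2 := h1.tendsto
      simpa [Real.one_rpow] using h2
    have hev := (((hcont.mono_left nhdsWithin_le_nhds).eventually_lt_const hc).and
      ((tendsto_id.mono_left nhdsWithin_le_nhds).eventually_lt_const
        (show (0:ℝ) < 1/4 by norm_num))).and
      (self_mem_nhdsWithin (s := Ioi (0:ℝ)) (a := (0:ℝ)))
    obtain ⟨ε, ⟨hcε, hε4⟩, hε0⟩ := hev.exists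

    simp only [id] at hε4
    set s₁ : ℝ := (1 - 2 * ε) ^ αi with hs₁def
    have h1ε : (0:ℝ) < 1 - 2 * ε := by linarith
    have hs₁0 : 0 < s₁ := Real.rpow_pos_of_pos h1ε αi
    have hs₁rv : s₁ ^ αi⁻¹ = 1 - 2 * ε := by
      rw [hs₁def, ← Real.rpow_mul h1ε.le, mul_inv_cancel₀ hαi.ne', Real.rpow_one]
    have hev1 : ∀ᶠ t in atTop, b (t * s₁) < (1 - ε) * b t := by
      have h := (hbrv s₁ hs₁0).eventually_lt_const
        (show s₁ ^ αi⁻¹ < (1 - ε : ℝ) by rw [hs₁rv]; linarith)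
      filter_upwards [h] with t ht
      have hbt := hbpos t
      calc b (t * s₁) = (b (t * s₁) / b t) * b t := (div_mul_cancel₀ _ hbt.ne').symm
        _ < (1 - ε) * b t := mul_lt_mul_of_pos_right ht hbt
    have hupp := (hscale s₁ hs₁0).add (htail (ε * m) (by positivity))
    rw [add_zero] at hupp
    have hev3 := hupp.eventually_lt_const (show s₁⁻¹ * L < c by rw [inv_mul_eq_div, ← inv_mul_eq_div]; exact hcε)
    filter_upwards [hev1, hev3, eventually_ge_atTop (0:ℝ)] with t hb1 h3 ht0
    have hincl : {ω | ∀ j ∈ S, b t * x j < X ω j + Y ω j} ⊆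
        {ω | ∀ j ∈ S, b (t * s₁) * x j < X ω j} ∪ {ω | ε * m * b t < ‖Y ω‖} := by
      intro ω hω
      by_cases hY : ε * m * b t < ‖Y ω‖
      · exact Or.inr hY
      · left
        intro j hj
        push_neg at hY
        have hYj : |Y ω j| ≤ ‖Y ω‖ := by
          simpa [Real.norm_eq_abs] using norm_le_pi_norm (Y ω) j
        have hxj := hxpos j hj
        have hmxj := hmle j hj
        have hbt := hbpos t
        have hY2 : Y ω j ≤ ε * x j * b t := by
          have h5 : ε * m * b t ≤ ε * x j * b t :=
            mul_le_mul_of_nonneg_right (mul_le_mul_of_nonneg_left hmxj hε0.le) hbt.le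
          have h6 := (abs_le.1 (hYj.trans hY)).2
          linarith
        have h7 := hω j hj
        have h8 : b (t * s₁) * x j < (1 - ε) * b t * x j :=
          mul_lt_mul_of_pos_right hb1 hxj
        nlinarith [mul_pos hbt hxj]
    have hsum := prob_toReal_le_add μ hincl
    have h8 := mul_le_mul_of_nonneg_left hsum ht0
    rw [mul_add] at h8
    linarith
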